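/- Let G and H be finite connected simple graphs. If μt(G) = |S(G)| or μt(H) = |S(H)|, where S(Γ) denotes the set of simplicial vertices of a graph Γ, then μt(G □ H) ≤ μt(G)·μt(H). -/

import Mathlib

open SimpleGraph

/-- `X` is a total mutual-visibility set of `G`: every two vertices of `G` are `X`-visible,
i.e. joined by a shortest path whose internal vertices avoid `X`. -/
def IsTMVSet {V : Type*} (G : SimpleGraph V) (X : Set V) : Prop :=
  ∀ x y : V, ∃ p : G.Walk x y, p.length = G.dist x y ∧
    ∀ w ∈ p.support, w ≠ x → w ≠ y → w ∉ X

/-- The total mutual-visibility number of `G`. -/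
noncomputable def muT {V : Type*} (G : SimpleGraph V) : ℕ :=
  sSup {n : ℕ | ∃ X : Set V, IsTMVSet G X ∧ X.ncard = n}

/-- `D` is a dominating set of `G`. -/
def IsDomSet {V : Type*} (G : SimpleGraph V) (D : Set V) : Prop :=
  ∀ v : V, v ∉ D → ∃ u ∈ D, G.Adj u v

/-- The domination number of `G`. -/
noncomputable def gammaDom {V : Type*} (G : SimpleGraph V) : ℕ :=
  sInf {n : ℕ | ∃ D : Set V, IsDomSet G D ∧ D.ncard = n}

/-- `D` is a connected dominating set of `G`. -/
def IsConnDomSet {V : Type*} (G : SimpleGraph V) (D : Set V) : Prop :=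
  IsDomSet G D ∧ (G.induce D).Connected

/-- The connected domination number of `G`. -/
noncomputable def gammaConnDom {V : Type*} (G : SimpleGraph V) : ℕ :=
  sInf {n : ℕ | ∃ D : Set V, IsConnDomSet G D ∧ D.ncard = n}

/-- The closed neighborhood of a vertex. -/
def closedNbhd {V : Type*} (G : SimpleGraph V) (v : V) : Set V :=
  insert v (G.neighborSet v)

/-- The set of simplicial vertices of `G`. -/
def simpSet {V : Type*} (G : SimpleGraph V) : Set V :=
  {v | G.IsClique (G.neighborSet v)}

/-- The set `P(G)` of vertices that appear as the unique common closed neighbor of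
two vertices. -/
def pSet {V : Type*} (G : SimpleGraph V) : Set V :=
  {v | ∃ u w : V, closedNbhd G u ∩ closedNbhd G w = {v}}

/-- The set `C(G)` of vertices belonging to every maximum total mutual-visibility set. -/
def compulsorySet {V : Type*} (G : SimpleGraph V) : Set V :=
  {v | ∀ X : Set V, IsTMVSet G X → X.ncard = muT G → v ∈ X}

/-- The set `F(G)` of vertices belonging to no maximum total mutual-visibility set. -/
def forbiddenSet {V : Type*} (G : SimpleGraph V) : Set V :=
  {v | ∀ X : Set V, IsTMVSet G X → X.ncard = muT G → v ∉ X}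

/-- The independent total mutual-visibility number of `G`. -/
noncomputable def muIT {V : Type*} (G : SimpleGraph V) : ℕ :=
  sSup {n : ℕ | ∃ X : Set V, IsTMVSet G X ∧ (∀ u ∈ X, ∀ v ∈ X, ¬ G.Adj u v) ∧ X.ncard = n}

/-- The join `G + H` of two graphs. -/
def joinGraph {V W : Type*} (G : SimpleGraph V) (H : SimpleGraph W) :
    SimpleGraph (V ⊕ W) :=
  SimpleGraph.fromRel (fun x y =>
    (∃ a b, x = Sum.inl a ∧ y = Sum.inl b ∧ G.Adj a b) ∨
    (∃ a b, x = Sum.inr a ∧ y = Sum.inr b ∧ H.Adj a b) ∨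
    (∃ a b, x = Sum.inl a ∧ y = Sum.inr b))

/-- The corona product `G ⊙ H`: a copy of `G` together with a copy `Hᵢ` of `H` for each
vertex `uᵢ` of `G`, where `uᵢ` is joined to all vertices of `Hᵢ`. -/
def coronaProd {V W : Type*} (G : SimpleGraph V) (H : SimpleGraph W) :
    SimpleGraph (V ⊕ V × W) :=
  SimpleGraph.fromRel (fun x y =>
    (∃ a b, x = Sum.inl a ∧ y = Sum.inl b ∧ G.Adj a b) ∨
    (∃ i w w', x = Sum.inr (i, w) ∧ y = Sum.inr (i, w') ∧ H.Adj w w') ∨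
    (∃ i w, x = Sum.inl i ∧ y = Sum.inr (i, w)))

/-- The lexicographic product `G ∘ H`. -/
def lexProd {V W : Type*} (G : SimpleGraph V) (H : SimpleGraph W) :
    SimpleGraph (V × W) where
  Adj x y := G.Adj x.1 y.1 ∨ (x.1 = y.1 ∧ H.Adj x.2 y.2)
  symm := ⟨fun x y h => by
    rcases h with h | ⟨h1, h2⟩
    · exact Or.inl h.symm
    · exact Or.inr ⟨h1.symm, h2.symm⟩⟩
  loopless := ⟨fun x h => by
    rcases h with h | ⟨_, h⟩
    · exact G.loopless.irrefl _ h
    · exact H.loopless.irrefl _ h⟩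

/-- `B` induces a 2-connected subgraph of `G`. -/
def IsTwoConnSet {V : Type*} (G : SimpleGraph V) (B : Set V) : Prop :=
  3 ≤ B.ncard ∧ (G.induce B).Connected ∧ ∀ v ∈ B, (G.induce (B \ {v})).Connected


section Helpers

open SimpleGraph Walk

variable {V W : Type*} {G : SimpleGraph V} {H : SimpleGraph W}

/-- Projection of a box-product walk to the second factor, with equality case info. -/
lemma projR : ∀ {u v : V × W} (p : (G □ H).Walk u v),
    ∃ q : H.Walk u.2 v.2, q.length ≤ p.length ∧
      (q.length = p.length →
        (∀ x ∈ p.support, x.1 = u.1) ∧ ∀ k ∈ q.support, (u.1, k) ∈ p.support) := by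
  intro u v p
  induction p with
  | nil =>
    refine ⟨Walk.nil, le_refl _, fun _ => ⟨?_, ?_⟩⟩
    · intro x hx; simp only [support_nil, List.mem_singleton] at hx; subst hx; rfl
    · intro k hk; simp only [support_nil, List.mem_singleton] at hk; subst hk; simp
  | @cons a b c e p' ih =>
    obtain ⟨q', hq1, hq2⟩ := ih
    rcases (SimpleGraph.boxProd_adj.mp e) with ⟨hGadj, h2⟩ | ⟨hHadj, h1⟩
    · refine ⟨q'.copy h2.symm rfl, ?_, ?_⟩
      · simp only [length_copy, length_cons]; omega
      · intro heq; exfalso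
        simp only [length_copy, length_cons] at heq; omega
    · refine ⟨Walk.cons hHadj q', by simp only [length_cons]; omega, ?_⟩
      intro heq
      have heq' : q'.length = p'.length := by
        simp only [length_cons] at heq; omega
      obtain ⟨hcol, hsup⟩ := hq2 heq'
      constructor
      · intro x hx
        rw [support_cons, List.mem_cons] at hx
        rcases hx with rfl | hx
        · rfl
        · exact (hcol x hx).trans h1.symm
      · intro k hk
        rw [support_cons, List.mem_cons] at hk
        rw [support_cons, List.mem_cons]
        rcases hk with rfl | hk
        · left; rfl
        · right; have := hsup k hk; rwa [← h1] at this

/-- Projection of a box-product walk to the first factor, with equality case info. -/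
lemma projL : ∀ {u v : V × W} (p : (G □ H).Walk u v),
    ∃ q : G.Walk u.1 v.1, q.length ≤ p.length ∧
      (q.length = p.length →
        (∀ x ∈ p.support, x.2 = u.2) ∧ ∀ k ∈ q.support, (k, u.2) ∈ p.support) := by
  intro u v p
  induction p with
  | nil =>
    refine ⟨Walk.nil, le_refl _, fun _ => ⟨?_, ?_⟩⟩
    · intro x hx; simp only [support_nil, List.mem_singleton] at hx; subst hx; rfl
    · intro k hk; simp only [support_nil, List.mem_singleton] at hk; subst hk; simp
  | @cons a b c e p' ih =>
    obtain ⟨q', hq1, hq2⟩ := ih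
    rcases (SimpleGraph.boxProd_adj.mp e) with ⟨hGadj, h2⟩ | ⟨hHadj, h1⟩
    · refine ⟨Walk.cons hGadj q', by simp only [length_cons]; omega, ?_⟩
      intro heq
      have heq' : q'.length = p'.length := by
        simp only [length_cons] at heq; omega
      obtain ⟨hcol, hsup⟩ := hq2 heq'
      constructor
      · intro x hx
        rw [support_cons, List.mem_cons] at hx
        rcases hx with rfl | hx
        · rfl
        · exact (hcol x hx).trans h2.symm
      · intro k hk
        rw [support_cons, List.mem_cons] at hk
        rw [support_cons, List.mem_cons]
        rcases hk with rfl | hk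
        · left; rfl
        · right; have := hsup k hk; rwa [← h2] at this
    · refine ⟨q'.copy h1.symm rfl, ?_, ?_⟩
      · simp only [length_copy, length_cons]; omega
      · intro heq; exfalso
        simp only [length_copy, length_cons] at heq; omega

lemma distColR (hH : H.Connected) (g : V) (h h' : W) :
    (G □ H).dist (g, h) (g, h') = H.dist h h' := by
  obtain ⟨r, hr⟩ := (hH h h').exists_walk_length_eq_dist
  have hreach : (G □ H).Reachable (g, h) (g, h') := ⟨r.boxProdRight G g⟩
  obtain ⟨p, hp⟩ := hreach.exists_walk_length_eq_dist
  obtain ⟨q, hq1, _⟩ := projR p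
  have h1 : H.dist h h' ≤ (G □ H).dist (g, h) (g, h') := by
    calc H.dist h h' ≤ q.length := SimpleGraph.dist_le q
    _ ≤ p.length := hq1
    _ = _ := hp
  have h2 : (G □ H).dist (g, h) (g, h') ≤ H.dist h h' := by
    have := SimpleGraph.dist_le (r.boxProdRight G g)
    rwa [show (r.boxProdRight G g).length = r.length from Walk.length_map _ _, hr] at this
  omega

lemma distColL (hG : G.Connected) (g g' : V) (h : W) :
    (G □ H).dist (g, h) (g', h) = G.dist g g' := by
  obtain ⟨r, hr⟩ := (hG g g').exists_walk_length_eq_dist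
  have hreach : (G □ H).Reachable (g, h) (g', h) := ⟨r.boxProdLeft H h⟩
  obtain ⟨p, hp⟩ := hreach.exists_walk_length_eq_dist
  obtain ⟨q, hq1, _⟩ := projL p
  have h1 : G.dist g g' ≤ (G □ H).dist (g, h) (g', h) := by
    calc G.dist g g' ≤ q.length := SimpleGraph.dist_le q
    _ ≤ p.length := hq1
    _ = _ := hp
  have h2 : (G □ H).dist (g, h) (g', h) ≤ G.dist g g' := by
    have := SimpleGraph.dist_le (r.boxProdLeft H h)
    rwa [show (r.boxProdLeft H h).length = r.length from Walk.length_map _ _, hr] at this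
  omega

/-- Fibers (columns) of a total mutual-visibility set of a box product are
total mutual-visibility sets of the second factor. -/
lemma fiberR (hH : H.Connected) {X : Set (V × W)} (hX : IsTMVSet (G □ H) X)
    (g : V) : IsTMVSet H {k | (g, k) ∈ X} := by
  intro h h'
  obtain ⟨p, hlen, havoid⟩ := hX (g, h) (g, h')
  have hd : (G □ H).dist (g, h) (g, h') = H.dist h h' := distColR hH g h h'
  obtain ⟨q, hq1, hq2⟩ := projR p
  have heq : q.length = p.length := by
    have h3 : H.dist h h' ≤ q.length := SimpleGraph.dist_le q
    omega
  obtain ⟨_, hsup⟩ := hq2 heq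
  refine ⟨q, by omega, ?_⟩
  intro k hk hk1 hk2 hmem
  exact havoid (g, k) (hsup k hk)
    (by simp only [ne_eq, Prod.mk.injEq]; tauto)
    (by simp only [ne_eq, Prod.mk.injEq]; tauto) hmem

/-- Fibers (rows) of a total mutual-visibility set of a box product are
total mutual-visibility sets of the first factor. -/
lemma fiberL (hG : G.Connected) {X : Set (V × W)} (hX : IsTMVSet (G □ H) X)
    (h : W) : IsTMVSet G {a | (a, h) ∈ X} := by
  intro g g'
  obtain ⟨p, hlen, havoid⟩ := hX (g, h) (g', h)
  have hd : (G □ H).dist (g, h) (g', h) = G.dist g g' := distColL hG g g' h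
  obtain ⟨q, hq1, hq2⟩ := projL p
  have heq : q.length = p.length := by
    have h3 : G.dist g g' ≤ q.length := SimpleGraph.dist_le q
    omega
  obtain ⟨_, hsup⟩ := hq2 heq
  refine ⟨q, by omega, ?_⟩
  intro k hk hk1 hk2 hmem
  exact havoid (k, h) (hsup k hk)
    (by simp only [ne_eq, Prod.mk.injEq]; tauto)
    (by simp only [ne_eq, Prod.mk.injEq]; tauto) hmem

/-- No internal vertex of a geodesic is simplicial. -/
lemma geodesic_avoids_simp (hG : G.Connected) :
    ∀ {x y : V} (p : G.Walk x y), p.length = G.dist x y →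
      ∀ w ∈ p.support, w ≠ x → w ≠ y → w ∉ simpSet G := by
  intro x y p
  induction p with
  | nil =>
    intro _ w hw hx _ _
    simp only [support_nil, List.mem_singleton] at hw
    exact hx hw
  | @cons x x₁ y e p' ih =>
    intro hlen w hw hwx hwy hS
    have hd0 : G.dist x x₁ ≤ 1 := by
      have := SimpleGraph.dist_le (Walk.cons e Walk.nil)
      simpa using this
    have hd1 : G.dist x y ≤ 1 + G.dist x₁ y := by
      have := hG.dist_triangle (u := x) (v := x₁) (w := y)
      omega
    have hd2 : G.dist x₁ y ≤ p'.length := SimpleGraph.dist_le p'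
    have hp'len : p'.length = G.dist x₁ y := by
      simp only [length_cons] at hlen
      omega
    rcases eq_or_ne w x₁ with rfl | hne
    · cases p' with
      | nil => exact hwy rfl
      | @cons _ x₂ _ e' r =>
        rcases eq_or_ne x x₂ with rfl | hxx
        · have := SimpleGraph.dist_le r
          rw [← hlen] at this
          simp only [length_cons] at this
          omega
        · have hadj : G.Adj x x₂ := hS (G.mem_neighborSet w x |>.mpr e.symm)
            (G.mem_neighborSet w x₂ |>.mpr e') hxx
          have := SimpleGraph.dist_le (Walk.cons hadj r)
          rw [← hlen] at this
          simp only [length_cons] at this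
          omega
    · have hw' : w ∈ p'.support := by
        rw [support_cons, List.mem_cons] at hw
        tauto
      exact ih hp'len w hw' hne hwy hS

/-- Adding the simplicial vertices to a TMV set keeps it a TMV set. -/
lemma union_simp_tmv (hG : G.Connected) {X : Set V} (hX : IsTMVSet G X) :
    IsTMVSet G (X ∪ simpSet G) := by
  intro x y
  obtain ⟨p, h1, h2⟩ := hX x y
  refine ⟨p, h1, fun w hw hx hy hmem => ?_⟩
  rcases hmem with hmem | hmem
  · exact h2 w hw hx hy hmem
  · exact geodesic_avoids_simp hG p h1 w hw hx hy hmem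

lemma tmv_ncard_le_muT [Fintype V] {X : Set V} (hX : IsTMVSet G X) :
    X.ncard ≤ muT G := by
  apply le_csSup
  · refine ⟨Fintype.card V, ?_⟩
    rintro n ⟨Y, _, rfl⟩
    have := Set.ncard_le_ncard (Set.subset_univ Y) Set.finite_univ
    simpa [Set.ncard_univ, Nat.card_eq_fintype_card] using this
  · exact ⟨X, hX, rfl⟩

/-- Fiberwise counting bound. -/
lemma count_le {A B : Type*} [Fintype A] [Fintype B] (X : Set (A × B)) (T : Set A)
    (m : ℕ) (h1 : ∀ x ∈ X, x.1 ∈ T) (h2 : ∀ a : A, {b | (a, b) ∈ X}.ncard ≤ m) :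
    X.ncard ≤ T.ncard * m := by
  classical
  have hXf : X.Finite := X.toFinite
  have hTf : T.Finite := T.toFinite
  rw [Set.ncard_eq_toFinset_card _ hXf, Set.ncard_eq_toFinset_card _ hTf]
  rw [Finset.card_eq_sum_card_fiberwise (f := Prod.fst) (t := hTf.toFinset)
    (fun x hx => by
      rw [Finset.mem_coe, Set.Finite.mem_toFinset] at hx ⊢
      exact h1 x hx)]
  have hfib : ∀ a ∈ hTf.toFinset,
      (hXf.toFinset.filter (fun x => x.1 = a)).card ≤ m := by
    intro a _
    have hinj : Set.InjOn Prod.snd ((hXf.toFinset.filter (fun x => x.1 = a) : Finset (A × B)) : Set (A × B)) := by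
      intro x hx y hy hxy
      simp only [Finset.coe_filter, Set.mem_setOf_eq] at hx hy
      exact Prod.ext (hx.2.trans hy.2.symm) hxy
    have hcard : (hXf.toFinset.filter (fun x => x.1 = a)).card
        = ((hXf.toFinset.filter (fun x => x.1 = a)).image Prod.snd).card :=
      (Finset.card_image_of_injOn hinj).symm
    have hseteq : (((hXf.toFinset.filter (fun x => x.1 = a)).image Prod.snd : Finset B) : Set B)
        = {b | (a, b) ∈ X} := by
      ext b
      simp only [Finset.coe_image, Set.mem_image, Finset.mem_coe, Finset.mem_filter,
        Set.Finite.mem_toFinset, Set.mem_setOf_eq]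
      constructor
      · rintro ⟨x, ⟨hxX, hx1⟩, hx2⟩
        have : x = (a, b) := Prod.ext hx1 hx2
        rwa [this] at hxX
      · intro hb
        exact ⟨(a, b), ⟨hb, rfl⟩, rfl⟩
    rw [hcard, ← Set.ncard_coe_finset, hseteq]
    exact h2 a
  calc ∑ a ∈ hTf.toFinset, (hXf.toFinset.filter (fun x => x.1 = a)).card
      ≤ ∑ _a ∈ hTf.toFinset, m := Finset.sum_le_sum hfib
    _ = hTf.toFinset.card * m := by rw [Finset.sum_const, smul_eq_mul]

end Helpers

/-- If `μt(G) = |S(G)|` or `μt(H) = |S(H)|`, then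
`μt(G □ H) ≤ μt(G) μt(H)`. -/
theorem muT_boxProd_le_mul {V W : Type*} [Fintype V] [Fintype W]
    (G : SimpleGraph V) (H : SimpleGraph W) (hG : G.Connected) (hH : H.Connected)
    (h : muT G = (simpSet G).ncard ∨ muT H = (simpSet H).ncard) :
    muT (G □ H) ≤ muT G * muT H := by
  classical
  have hbox : (G □ H).Connected := (SimpleGraph.connected_boxProd).mpr ⟨hG, hH⟩
  apply csSup_le
  · refine ⟨0, ∅, ?_, Set.ncard_empty _⟩
    intro x y
    obtain ⟨p, hp⟩ := (hbox x y).exists_walk_length_eq_dist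
    exact ⟨p, hp, fun w _ _ _ hw => hw⟩
  · rintro n ⟨X, hX, rfl⟩
    rcases h with hh | hh
    · have key : ∀ x ∈ X, x.1 ∈ simpSet G := by
        rintro ⟨g, k⟩ hx
        have hfib : IsTMVSet G {a | (a, k) ∈ X} := fiberL hG hX k
        have hu : IsTMVSet G ({a | (a, k) ∈ X} ∪ simpSet G) := union_simp_tmv hG hfib
        have hle : ({a | (a, k) ∈ X} ∪ simpSet G).ncard ≤ (simpSet G).ncard :=
          hh ▸ tmv_ncard_le_muT hu
        have heq := Set.eq_of_subset_of_ncard_le Set.subset_union_right hle (Set.toFinite _)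
        have : (g : V) ∈ ({a | (a, k) ∈ X} ∪ simpSet G) := Set.mem_union_left _ hx
        rwa [← heq] at this
      have hcount := count_le X (simpSet G) (muT H) key
        (fun a => tmv_ncard_le_muT (fiberR hH hX a))
      rwa [← hh] at hcount
    · have key : ∀ x ∈ X, x.2 ∈ simpSet H := by
        rintro ⟨g, k⟩ hx
        have hfib : IsTMVSet H {b | (g, b) ∈ X} := fiberR hH hX g
        have hu : IsTMVSet H ({b | (g, b) ∈ X} ∪ simpSet H) := union_simp_tmv hH hfib
        have hle : ({b | (g, b) ∈ X} ∪ simpSet H).ncard ≤ (simpSet H).ncard :=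
          hh ▸ tmv_ncard_le_muT hu
        have heq := Set.eq_of_subset_of_ncard_le Set.subset_union_right hle (Set.toFinite _)
        have : (k : W) ∈ ({b | (g, b) ∈ X} ∪ simpSet H) := Set.mem_union_left _ hx
        rwa [← heq] at this
      have hswap : X.ncard = (Prod.swap '' X).ncard :=
        (Set.ncard_image_of_injective _ Prod.swap_injective).symm
      have hcount := count_le (Prod.swap '' X) (simpSet H) (muT G)
        (by rintro x ⟨y, hy, rfl⟩; exact key y hy)
        (by
          intro b
          have hseteq : {a | (b, a) ∈ Prod.swap '' X} = {a | (a, b) ∈ X} := by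
            ext a
            constructor
            · rintro ⟨⟨a1, b1⟩, h1, h2⟩
              have hb : b1 = b := congrArg Prod.fst h2
              have ha : a1 = a := congrArg Prod.snd h2
              subst hb; subst ha; exact h1
            · intro hx; exact ⟨(a, b), hx, rfl⟩
          rw [hseteq]
          exact tmv_ncard_le_muT (fiberL hG hX b))
      rw [hswap]
      calc (Prod.swap '' X).ncard ≤ (simpSet H).ncard * muT G := hcount
        _ = muT G * muT H := by rw [← hh, mul_comm]
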